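/- Let 1 < r < 3 and let f : ℝⁿ → ℝ be convex and continuously differentiable, attaining its minimum f⋆ at x⋆. Suppose that the function x ↦ (f(x) − f⋆)^{(r−1)/2} is convex, and let X be a solution to the generalized ODE Ẍ + (r/t)Ẋ + ∇f(X) = 0 with X(0) = x₀, Ẋ(0) = 0. Then for every t > 0, f(X(t)) − f⋆ ≤ (r−1)²‖x₀ − x⋆‖²/(2t²). -/

import Mathlib

open Set Filter Topology Real

noncomputable section

abbrev E (n : ℕ) := EuclideanSpace ℝ (Fin n)

/-- A solution of the generalized ODE `Ẍ + (r/t)Ẋ + ∇f(X) = 0`, `X(0) = x₀`, `Ẋ(0) = 0`,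
C² on `(0,∞)`, C¹ on `[0,∞)`. -/
def GenNesterovSol (n : ℕ) (r : ℝ) (f : E n → ℝ) (x0 : E n) (X : ℝ → E n) : Prop :=
  X 0 = x0 ∧
  ContDiffOn ℝ 1 X (Set.Ici 0) ∧
  ContDiffOn ℝ 2 X (Set.Ioi 0) ∧
  derivWithin X (Set.Ici 0) 0 = 0 ∧
  ∀ t > (0:ℝ), deriv (deriv X) t + (r / t) • deriv X t + gradient f (X t) = 0

open InnerProductSpace

lemma keyA (n : ℕ) (r : ℝ) (hr1 : 1 < r)
    (f : E n → ℝ) (hsmooth : ContDiff ℝ 1 f)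
    (xstar : E n) (hmin : IsMinOn f Set.univ xstar)
    (hpow : ConvexOn ℝ Set.univ (fun x => (f x - f xstar) ^ ((r - 1) / 2)))
    (x : E n) :
    (2 / (r - 1)) * (f x - f xstar) ≤ ⟪gradient f x, x - xstar⟫_ℝ := by
  set p : ℝ := (r - 1) / 2 with hpdef
  have hp : 0 < p := by simp only [hpdef]; linarith
  have hA0 : 0 ≤ f x - f xstar := by
    have := hmin (mem_univ x)
    simp only [Set.mem_setOf_eq] at this
    linarith
  rcases eq_or_lt_of_le hA0 with hA | hA
  · -- f x = f xstar : x is a global min, gradient zero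
    have hxmin : IsMinOn f univ x := by
      intro y _
      have := hmin (mem_univ y)
      simp only [mem_setOf_eq] at this ⊢
      linarith
    have hloc : IsLocalMin f x := hxmin.isLocalMin (by simp)
    have hfder : fderiv ℝ f x = 0 := hloc.fderiv_eq_zero
    have : gradient f x = 0 := by rw [gradient, hfder, map_zero]
    rw [this, ← hA]
    simp
  · -- f x > f xstar
    have hdf : DifferentiableAt ℝ f x := (hsmooth.differentiable one_ne_zero) x
    have hgrad : HasGradientAt f (gradient f x) x := hdf.hasGradientAt
    set d : ℝ := ⟪gradient f x, xstar - x⟫_ℝ with hddef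
    -- g s = (f (x + s • (xstar - x)) - f xstar) ^ p
    set L : ℝ →ᵃ[ℝ] E n := AffineMap.lineMap x xstar with hL
    have hgc : ConvexOn ℝ univ (fun s : ℝ => (f (L s) - f xstar) ^ p) := by
      have := hpow.comp_affineMap L
      simpa [Function.comp_def] using this
    have hinner : HasDerivAt (fun s : ℝ => f (L s) - f xstar) d 0 := by
      have hLd : HasDerivAt (fun s : ℝ => L s) (xstar - x) 0 := by
        have : (fun s : ℝ => L s) = fun s : ℝ => s • (xstar - x) + x := by
          funext s
          simp only [hL, AffineMap.lineMap_apply_module]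
          module
        rw [this]
        simpa using ((hasDerivAt_id (0:ℝ)).smul_const (xstar - x)).add_const x
      have hgx : HasFDerivAt f (toDual ℝ (E n) (gradient f x)) (L 0) := by
        simpa [hL] using hgrad.hasFDerivAt
      have := hgx.comp_hasDerivAt 0 hLd
      simpa [hddef, toDual_apply_apply] using this.sub_const (f xstar)
    have hAne : f (L 0) - f xstar ≠ 0 := by
      simp only [hL, AffineMap.lineMap_apply_zero]; linarith
    have hgder : HasDerivAt (fun s : ℝ => (f (L s) - f xstar) ^ p)
        (d * p * (f (L 0) - f xstar) ^ (p - 1)) 0 := hinner.rpow_const (Or.inl hAne)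
    have hslope := hgc.le_slope_of_hasDerivAt (mem_univ 0) (mem_univ 1) one_pos hgder
    have hL0 : L 0 = x := by simp [hL]
    have hL1 : L 1 = xstar := by simp [hL]
    rw [slope_def_field] at hslope
    have hg1 : (f (L 1) - f xstar) ^ p = 0 := by
      rw [hL1]; simp [Real.zero_rpow (ne_of_gt hp)]
    have hg0 : (f (L 0) - f xstar) ^ p = (f x - f xstar) ^ p := by rw [hL0]
    rw [hL0] at hgder
    -- hslope : d * p * (f x - f xstar)^(p-1) ≤ (0 - (f x - f xstar)^p) / (1 - 0)
    have key : d * p * (f x - f xstar) ^ (p - 1) ≤ -((f x - f xstar) ^ p) := by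
      have := hslope
      rw [hg1, hg0, hL0] at this
      simpa using this
    have hB : (0:ℝ) < (f x - f xstar) ^ (p - 1) := Real.rpow_pos_of_pos hA _
    have hsplit : (f x - f xstar) ^ p = (f x - f xstar) ^ (p - 1) * (f x - f xstar) := by
      rw [← Real.rpow_add_one (ne_of_gt hA)]; ring_nf
    have hdx : ⟪gradient f x, x - xstar⟫_ℝ = -d := by
      rw [hddef, ← inner_neg_right]; congr 1; abel
    rw [hdx]
    rw [hsplit] at key
    have key2 : d * p ≤ -(f x - f xstar) := by nlinarith [key, hB]
    have hpinv : 2 / (r - 1) = 1 / p := by rw [hpdef]; field_simp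
    rw [hpinv, div_mul_eq_mul_div, div_le_iff₀ hp]
    have h3 : -(d * p) = -d * p := by ring
    linarith [key2, h3]

/-- **Theorem 7 (low friction with extra structure).** For `1 < r < 3` and convex
continuously differentiable `f` whose centered `(r-1)/2` power is convex, the solution of the
generalized ODE satisfies `f(X(t)) - f⋆ ≤ (r-1)²‖x₀-x⋆‖²/(2t²)`. -/
theorem gen_ode_low_friction (n : ℕ) (r : ℝ) (hr1 : 1 < r) (hr3 : r < 3)
    (f : E n → ℝ) (hconv : ConvexOn ℝ Set.univ f) (hsmooth : ContDiff ℝ 1 f)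
    (xstar : E n) (hmin : IsMinOn f Set.univ xstar)
    (hpow : ConvexOn ℝ Set.univ (fun x => (f x - f xstar) ^ ((r - 1) / 2)))
    (x0 : E n) (X : ℝ → E n) (hX : GenNesterovSol n r f x0 X) :
    ∀ t > (0:ℝ), f (X t) - f xstar ≤ (r - 1) ^ 2 * ‖x0 - xstar‖ ^ 2 / (2 * t ^ 2) := by
  obtain ⟨hX0, hC1, hC2, hV00, hODE⟩ := hX
  intro t ht
  set c : ℝ := r - 1 with hcdef
  have hc : 0 < c := by rw [hcdef]; linarith
  set V : ℝ → E n := fun u => derivWithin X (Set.Ici 0) u with hVdef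
  set Φ : ℝ → ℝ := fun u => (u / c) ^ 2 * (f (X u) - f xstar)
      + (1 / 2) * ‖X u + (u / c) • V u - xstar‖ ^ 2 with hPhi
  -- continuity pieces
  have hXcont : ContinuousOn X (Set.Ici 0) := hC1.continuousOn
  have hVcont : ContinuousOn V (Set.Ici 0) :=
    hC1.continuousOn_derivWithin (uniqueDiffOn_Ici 0) le_rfl
  have hPhiCont : ContinuousOn Φ (Set.Icc 0 t) := by
    have h2 : ContinuousOn (fun u => f (X u) - f xstar) (Set.Ici 0) :=
      (hsmooth.continuous.comp_continuousOn hXcont).sub continuousOn_const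
    have h3 : ContinuousOn (fun u => X u + (u / c) • V u - xstar) (Set.Ici 0) :=
      (hXcont.add ((continuousOn_id.div_const c).smul hVcont)).sub continuousOn_const
    have : ContinuousOn Φ (Set.Ici 0) := by
      refine ContinuousOn.add (ContinuousOn.mul ?_ h2) (continuousOn_const.mul ((h3.norm).pow 2))
      exact (continuousOn_id.div_const c).pow 2
    exact this.mono (Set.Icc_subset_Ici_self)
  -- eventual equality of V with deriv X on (0, ∞)
  have hVeq : ∀ u ∈ Set.Ioi (0:ℝ), V u = deriv X u := by
    intro u hu
    exact derivWithin_of_mem_nhds (mem_of_superset (Ioi_mem_nhds hu) Ioi_subset_Ici_self)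
  -- key derivative fact
  have hXdiff : DifferentiableOn ℝ X (Set.Ioi 0) := hC2.differentiableOn two_ne_zero
  have hC2' : ContDiffOn ℝ 1 (deriv X) (Set.Ioi 0) :=
    hC2.deriv_of_isOpen isOpen_Ioi (by norm_num)
  have hDer : ∀ s ∈ Set.Ioo (0:ℝ) t, HasDerivAt Φ
      ((s / c) * ((2 / c) * (f (X s) - f xstar) - ⟪gradient f (X s), X s - xstar⟫_ℝ)) s := by
    intro s hs
    have hs0 : 0 < s := hs.1
    set G : E n := gradient f (X s) with hG
    set x' : E n := deriv X s with hx'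
    set x'' : E n := deriv (deriv X) s with hx''
    have hdX : HasDerivAt X x' s :=
      (hXdiff.differentiableAt (Ioi_mem_nhds hs0)).hasDerivAt
    have hdX2 : HasDerivAt (deriv X) x'' s :=
      ((hC2'.differentiableOn one_ne_zero).differentiableAt (Ioi_mem_nhds hs0)).hasDerivAt
    have hfd : HasDerivAt (fun u => f (X u)) ⟪G, x'⟫_ℝ s := by
      have := (((hsmooth.differentiable one_ne_zero) (X s)).hasGradientAt.hasFDerivAt).comp_hasDerivAt s hdX
      simpa [hG, toDual_apply_apply, Function.comp_def] using this
    have hode : x'' = -((r / s) • x') - G := by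
      have h := hODE s hs0
      rw [add_assoc, add_eq_zero_iff_eq_neg] at h
      rw [hx'', h]; abel
    -- derivative of Y := fun u => X u + (u/c) • deriv X u - xstar
    have hY : HasDerivAt (fun u => X u + (u / c) • deriv X u - xstar)
        (-(s / c) • G) s := by
      have h1 := HasDerivAt.smul ((hasDerivAt_id s).div_const c) hdX2
      have h2 := (hdX.add h1).sub_const xstar
      convert h2 using 1
      · rfl
      · rfl
      · rfl
      · rfl
      simp only [id_eq, ← hx']
      rw [hode]
      match_scalars <;> field_simp <;> ring
    -- derivative of the squared norm term
    have hYnorm : HasDerivAt (fun u => ‖X u + (u / c) • deriv X u - xstar‖ ^ 2)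
        (2 * ⟪X s + (s / c) • x' - xstar, -(s / c) • G⟫_ℝ) s := by
      have h1 := HasDerivAt.inner ℝ hY hY
      have heq : (fun u => ‖X u + (u / c) • deriv X u - xstar‖ ^ 2)
          = (fun u => ⟪X u + (u / c) • deriv X u - xstar,
              X u + (u / c) • deriv X u - xstar⟫_ℝ) := by
        funext u; rw [real_inner_self_eq_norm_sq]
      rw [heq]
      convert h1 using 1
      · rfl
      · rfl
      rw [real_inner_comm]
      ring
    -- derivative of (u/c)^2
    have hsq : HasDerivAt (fun u : ℝ => (u / c) ^ 2) (2 * (s / c) * (1 / c)) s := by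
      have := ((hasDerivAt_id s).div_const c).pow 2
      simpa [Pi.pow_def] using this
    have htot := (hsq.mul (hfd.sub_const (f xstar))).add
      (hYnorm.const_mul (1 / 2))
    -- Ψ agrees with Φ near s
    have hEv : (fun u => (u / c) ^ 2 * (f (X u) - f xstar)
        + 1 / 2 * ‖X u + (u / c) • deriv X u - xstar‖ ^ 2) =ᶠ[𝓝 s] Φ := by
      filter_upwards [Ioi_mem_nhds hs0] with u hu
      rw [hPhi]
      simp only [hVeq u hu]
    have htot' := htot.congr_of_eventuallyEq hEv.symm
    convert htot' using 1
    · rfl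
    · rfl
    rw [real_inner_smul_right, inner_sub_left, inner_add_left, real_inner_smul_left,
      inner_sub_right, real_inner_comm (X s) G, real_inner_comm xstar G,
      real_inner_comm x' G]
    ring
  -- antitonicity
  have hAnti : AntitoneOn Φ (Set.Icc 0 t) := by
    apply antitoneOn_of_deriv_nonpos (convex_Icc 0 t) hPhiCont
    · rw [interior_Icc]
      intro s hs
      exact ((hDer s hs).differentiableAt).differentiableWithinAt
    · rw [interior_Icc]
      intro s hs
      rw [(hDer s hs).deriv]
      have hkey := keyA n r hr1 f hsmooth xstar hmin hpow (X s)
      rw [← hcdef] at hkey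
      have h1 : (2 / c) * (f (X s) - f xstar) - ⟪gradient f (X s), X s - xstar⟫_ℝ ≤ 0 := by
        linarith
      have h2 : 0 ≤ s / c := div_nonneg hs.1.le hc.le
      simpa using mul_le_mul_of_nonneg_left h1 h2
  have hPhi0 : Φ 0 = (1 / 2) * ‖x0 - xstar‖ ^ 2 := by
    rw [hPhi]
    simp [hX0]
  have hle : Φ t ≤ (1 / 2) * ‖x0 - xstar‖ ^ 2 := by
    rw [← hPhi0]
    exact hAnti (Set.left_mem_Icc.mpr ht.le) (Set.right_mem_Icc.mpr ht.le) ht.le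
  have hnn : 0 ≤ (1 / 2) * ‖X t + (t / c) • V t - xstar‖ ^ 2 := by positivity
  have h' : (t / c) ^ 2 * (f (X t) - f xstar) ≤ (1 / 2) * ‖x0 - xstar‖ ^ 2 := by
    rw [hPhi] at hle
    simp only at hle
    linarith
  have ht2 : (0:ℝ) < t ^ 2 := by positivity
  have hc2 : (0:ℝ) < c ^ 2 := by positivity
  rw [div_pow, div_mul_eq_mul_div, div_le_iff₀ hc2] at h'
  rw [le_div_iff₀ (by positivity : (0:ℝ) < 2 * t ^ 2)]
  have hexp : (f (X t) - f xstar) * (2 * t ^ 2) = 2 * (t ^ 2 * (f (X t) - f xstar)) := by ring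
  have hexp2 : c ^ 2 * ‖x0 - xstar‖ ^ 2 = 2 * (1 / 2 * ‖x0 - xstar‖ ^ 2 * c ^ 2) := by ring
  rw [hexp, hexp2]
  linarith [h']
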